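/- arXiv:math/0508124 — 4 statements merged into one kernel-verified Lean document; each statement's English description precedes it below -/
import Mathlib

section
/- For the Laplace operator Δ on polynomials in three variables and Q = x² + y² + z², if T is a homogeneous polynomial of degree d-2 and Q·T is harmonic (Δ(Q·T) = 0), then T = 0. Consequently, the space of harmonic homogeneous polynomials of degree d intersects the space of polynomials divisible by Q only in {0}. -/
open MvPolynomial

/-- The Laplace operator on polynomials in three variables. -/
noncomputable def lap (P : MvPolynomial (Fin 3) ℂ) : MvPolynomial (Fin 3) ℂ :=
  ∑ i : Fin 3, pderiv i (pderiv i P)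

open Finsupp in
noncomputable def Qp : MvPolynomial (Fin 3) ℂ := X 0 ^ 2 + X 1 ^ 2 + X 2 ^ 2

lemma deg3 (v : Fin 3 →₀ ℕ) : v.degree = v 0 + v 1 + v 2 := by
  rw [Finsupp.degree_apply]
  rw [Finset.sum_subset (Finset.subset_univ v.support)
    (by intro i _ hi; simpa using Finsupp.notMem_support_iff.mp hi)]
  simp [Fin.sum_univ_three]

lemma pderiv_isHomogeneous {k : ℕ} {T : MvPolynomial (Fin 3) ℂ} (hT : T.IsHomogeneous k)
    (i : Fin 3) : (pderiv i T).IsHomogeneous (k - 1) := by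
  rw [T.as_sum, map_sum]
  apply IsHomogeneous.sum
  intro v hv
  rw [pderiv_monomial]
  by_cases h : v i = 0
  · simp [h, isHomogeneous_zero]
  · apply isHomogeneous_monomial
    have hd : v.degree = k := by
      have := hT (MvPolynomial.mem_support_iff.mp hv)
      change (Finsupp.weight fun _ => 1) v = k at this
      rwa [← Finsupp.degree_eq_weight_one] at this
    rw [deg3] at hd
    rw [deg3]
    simp only [Finsupp.tsub_apply, Finsupp.single_apply]
    fin_cases i <;> simp_all <;> omega

lemma supp_deg3 {k : ℕ} {T : MvPolynomial (Fin 3) ℂ} (hT : T.IsHomogeneous k)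
    {v : Fin 3 →₀ ℕ} (hv : v ∈ T.support) : v 0 + v 1 + v 2 = k := by
  have := hT (MvPolynomial.mem_support_iff.mp hv)
  change (Finsupp.weight fun _ => 1) v = k at this
  rw [← Finsupp.degree_eq_weight_one, deg3] at this
  exact this

lemma pderiv_eq_zero_of_isHomogeneous_zero {T : MvPolynomial (Fin 3) ℂ}
    (hT : T.IsHomogeneous 0) (i : Fin 3) : pderiv i T = 0 := by
  rw [T.as_sum, map_sum]
  apply Finset.sum_eq_zero
  intro v hv
  have h := supp_deg3 hT hv
  have : v i = 0 := by fin_cases i <;> simp_all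
  simp [pderiv_monomial, this]

lemma X_mul_pderiv_monomial (v : Fin 3 →₀ ℕ) (a : ℂ) (i : Fin 3) :
    X i * pderiv i (monomial v a) = C ((v i : ℂ)) * monomial v a := by
  rw [pderiv_monomial]
  by_cases h : v i = 0
  · simp [h]
  · have hsingle : Finsupp.single i 1 + (v - Finsupp.single i 1) = v := by
      ext j
      simp only [Finsupp.add_apply, Finsupp.tsub_apply, Finsupp.single_apply]
      by_cases hj : i = j
      · subst hj; simp; omega
      · simp [hj]
    rw [X, monomial_mul, hsingle, C_mul_monomial]
    congr 1
    ring

lemma euler {k : ℕ} {T : MvPolynomial (Fin 3) ℂ} (hT : T.IsHomogeneous k) :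
    ∑ i : Fin 3, X i * pderiv i T = (C (k : ℂ)) * T := by
  conv_lhs => rw [T.as_sum]
  simp only [map_sum, Finset.mul_sum]
  rw [Finset.sum_comm]
  rw [Finset.sum_congr rfl (fun v hv => ?_), ← Finset.mul_sum, ← T.as_sum]
  have h := supp_deg3 hT hv
  simp only [X_mul_pderiv_monomial, ← Finset.sum_mul, ← map_sum]
  rw [Fin.sum_univ_three]
  norm_cast
  rw [h]

lemma pderiv_Qp (i : Fin 3) : pderiv i Qp = C 2 * X i := by
  fin_cases i <;>
    simp [Qp, pderiv_pow, pderiv_X_self, pderiv_X_of_ne, Fin.ext_iff] <;>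
    exact (map_ofNat C 2).symm

lemma lap_Qp_mul {k : ℕ} {T : MvPolynomial (Fin 3) ℂ} (hT : T.IsHomogeneous k) :
    lap (Qp * T) = Qp * lap T + C ((4 * k + 6 : ℕ) : ℂ) * T := by
  unfold lap
  have step : ∀ i : Fin 3, pderiv i (pderiv i (Qp * T)) =
      C 2 * T + C 4 * (X i * pderiv i T) + Qp * pderiv i (pderiv i T) := by
    intro i
    simp only [pderiv_mul, pderiv_Qp, map_add, pderiv_C_mul, pderiv_X_self, mul_one, pderiv_C,
      zero_mul, zero_add]
    rw [show (C 4 : MvPolynomial (Fin 3) ℂ) = C 2 + C 2 by rw [← map_add]; norm_num]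
    ring
  rw [Finset.sum_congr rfl (fun i _ => step i), Finset.sum_add_distrib,
    Finset.sum_add_distrib, Finset.sum_const, Finset.card_univ, Fintype.card_fin,
    ← Finset.mul_sum, ← Finset.mul_sum, euler hT]
  have h3 : (3 : ℕ) • (C (2:ℂ) * T) = C (6:ℂ) * T := by
    rw [← Nat.cast_smul_eq_nsmul ℂ, smul_eq_C_mul, ← mul_assoc, ← map_mul]
    norm_num
  have h4 : ((4 * k + 6 : ℕ) : ℂ) = 6 + 4 * (k : ℂ) := by push_cast; ring
  rw [h3, h4, map_add, map_mul]
  ring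

lemma lap_isHomogeneous {k : ℕ} {T : MvPolynomial (Fin 3) ℂ} (hT : T.IsHomogeneous k) :
    (lap T).IsHomogeneous (k - 2) := by
  unfold lap
  apply IsHomogeneous.sum
  intro i _
  have h2 := pderiv_isHomogeneous (pderiv_isHomogeneous hT i) i
  simpa [Nat.sub_sub] using h2

lemma lap_eq_zero_of_le_one {k : ℕ} {T : MvPolynomial (Fin 3) ℂ} (hT : T.IsHomogeneous k)
    (hk : k ≤ 1) : lap T = 0 := by
  unfold lap
  apply Finset.sum_eq_zero
  intro i _
  interval_cases k
  · rw [pderiv_eq_zero_of_isHomogeneous_zero hT i, map_zero]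
  · exact pderiv_eq_zero_of_isHomogeneous_zero (by simpa using pderiv_isHomogeneous hT i) i

lemma Qp_ne_zero : Qp ≠ 0 := by
  intro h
  have h3 : eval (fun _ => (1:ℂ)) Qp = 3 := by simp [Qp]; norm_num
  rw [h] at h3
  simp at h3

lemma key : ∀ k : ℕ, ∀ c : ℝ, c < 0 → ∀ T : MvPolynomial (Fin 3) ℂ,
    T.IsHomogeneous k → Qp * lap T = C (c : ℂ) * T → T = 0 := by
  intro k
  induction k using Nat.strong_induction_on with
  | _ k ih =>
    intro c hc T hT hQT
    have hcne : (C (c : ℂ) : MvPolynomial (Fin 3) ℂ) ≠ 0 := by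
      simp only [ne_eq, C_eq_zero, Complex.ofReal_eq_zero]
      exact hc.ne
    by_cases hk : k ≤ 1
    · rw [lap_eq_zero_of_le_one hT hk, mul_zero] at hQT
      rcases mul_eq_zero.mp hQT.symm with h | h
      · exact absurd h hcne
      · exact h
    · push_neg at hk
      set S := lap T with hS
      have hSh : S.IsHomogeneous (k - 2) := lap_isHomogeneous hT
      have hid := lap_Qp_mul hSh
      have hlapQS : lap (Qp * S) = C (c : ℂ) * S := by
        rw [hQT, hS]
        unfold lap
        rw [Finset.mul_sum]
        exact Finset.sum_congr rfl fun i _ => by rw [pderiv_C_mul, pderiv_C_mul]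
      rw [hlapQS] at hid
      have hQS : Qp * lap S = C ((c - (4 * (k - 2 : ℕ) + 6) : ℝ) : ℂ) * S := by
        push_cast at hid ⊢
        rw [map_sub]
        linear_combination -hid
      have hS0 : S = 0 := ih (k - 2) (by omega)
        (c - (4 * (k - 2 : ℕ) + 6))
        (by have h0 : (0:ℝ) ≤ ((k - 2 : ℕ) : ℝ) := Nat.cast_nonneg _; linarith)
        S hSh hQS
      rw [hS0, mul_zero] at hQT
      rcases mul_eq_zero.mp hQT.symm with h | h
      · exact absurd h hcne
      · exact h

/-- For `Q = x² + y² + z²`: if `T` is homogeneous and `Q·T` is harmonic then `T = 0`;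
consequently harmonic homogeneous polynomials of degree `d` meet `Q·V(d-2)` only in `0`. -/
theorem harmonic_inter_QV_eq_zero :
    (∀ (k : ℕ) (T : MvPolynomial (Fin 3) ℂ), T.IsHomogeneous k →
      lap ((X (0 : Fin 3) ^ 2 + X 1 ^ 2 + X 2 ^ 2) * T) = 0 → T = 0) ∧
    (∀ (d : ℕ) (P T : MvPolynomial (Fin 3) ℂ), P.IsHomogeneous d → lap P = 0 →
      T.IsHomogeneous (d - 2) →
      P = (X (0 : Fin 3) ^ 2 + X 1 ^ 2 + X 2 ^ 2) * T → P = 0) := by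
  have main : ∀ (k : ℕ) (T : MvPolynomial (Fin 3) ℂ), T.IsHomogeneous k →
      lap ((X (0 : Fin 3) ^ 2 + X 1 ^ 2 + X 2 ^ 2) * T) = 0 → T = 0 := by
    intro k T hT hlap
    have hQ : (X (0 : Fin 3) ^ 2 + X 1 ^ 2 + X 2 ^ 2 : MvPolynomial (Fin 3) ℂ) = Qp := rfl
    rw [hQ] at hlap
    have hid := lap_Qp_mul hT
    rw [hlap] at hid
    apply key k (-(4 * (k:ℝ) + 6))
      (by rw [neg_lt_zero]; positivity)
    · exact hT
    · push_cast at hid ⊢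
      rw [map_neg]
      linear_combination -hid
  refine ⟨main, ?_⟩
  intro d P T hP hlapP hT hPQ
  have hT0 : T = 0 := main (d - 2) T hT (by rw [← hPQ]; exact hlapP)
  rw [hPQ, hT0, mul_zero]
end

section
/- Let Q be a nondegenerate complex quadratic form in three variables with associated operator Δ_Q. If S is a polynomial with Δ_Q((Q − 1)·S) = 0, then S = 0. -/
open MvPolynomial

/-- The Laplace-type operator `Δ_Q = Σ b^{jk} ∂_j ∂_k` associated to an invertible
symmetric matrix `B` (with `(b^{jk}) = B⁻¹`). -/
noncomputable def lapQ (B : Matrix (Fin 3) (Fin 3) ℂ) (P : MvPolynomial (Fin 3) ℂ) :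
    MvPolynomial (Fin 3) ℂ :=
  ∑ j : Fin 3, ∑ k : Fin 3, B⁻¹ j k • pderiv j (pderiv k P)

/-- The quadratic form `Q(v) = v B vᵀ` as a polynomial. -/
noncomputable def quadForm (B : Matrix (Fin 3) (Fin 3) ℂ) : MvPolynomial (Fin 3) ℂ :=
  ∑ j : Fin 3, ∑ k : Fin 3, B j k • (X j * X k)

namespace LapQAux

/-- Euler identity for homogeneous polynomials. -/
lemma euler_id {n : ℕ} {f : MvPolynomial (Fin 3) ℂ} (hf : f.IsHomogeneous n) :
    ∑ i : Fin 3, X i * pderiv i f = (n : ℂ) • f := by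
  have step1 : ∑ i : Fin 3, X i * pderiv i f
      = ∑ d ∈ f.support, ∑ i : Fin 3, X i * pderiv i (monomial d (coeff d f)) := by
    rw [Finset.sum_comm]
    refine Finset.sum_congr rfl fun i _ => ?_
    conv_lhs => rw [f.as_sum]
    rw [map_sum, Finset.mul_sum]
  rw [step1]
  conv_rhs => rw [f.as_sum]
  rw [Finset.smul_sum]
  refine Finset.sum_congr rfl fun d hd => ?_
  have hdeg : d.degree = n := by
    rw [Finsupp.degree_eq_weight_one]; exact hf (mem_support_iff.mp hd)
  have key : ∀ i : Fin 3, X i * pderiv i (monomial d (coeff d f))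
      = monomial d (coeff d f * d i) := by
    intro i
    rw [pderiv_monomial]
    by_cases h : d i = 0
    · simp [h]
    · have harg : Finsupp.single i 1 + (d - Finsupp.single i 1) = d := by
        ext j
        simp only [Finsupp.add_apply, Finsupp.tsub_apply, Finsupp.single_apply]
        split_ifs with hij
        · subst hij; omega
        · omega
      rw [X, monomial_mul, one_mul, harg]
  simp only [key]
  rw [← map_sum (monomial d) (fun i => coeff d f * (d i : ℂ)) Finset.univ, ← Finset.mul_sum]
  have hsum : (∑ i : Fin 3, ((d i : ℕ) : ℂ)) = (n : ℂ) := by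
    rw [← hdeg, Finsupp.degree_eq_sum, Nat.cast_sum]
  rw [hsum, smul_monomial, mul_comm, smul_eq_mul]

lemma pderiv_isHomogeneous {n : ℕ} {f : MvPolynomial (Fin 3) ℂ} (hf : f.IsHomogeneous n)
    (i : Fin 3) : (pderiv i f).IsHomogeneous (n - 1) := by
  have hrw : pderiv i f = ∑ d ∈ f.support, pderiv i (monomial d (coeff d f)) := by
    conv_lhs => rw [f.as_sum]
    rw [map_sum]
  rw [hrw]
  apply IsHomogeneous.sum
  intro d hd
  have hdeg : d.degree = n := by
    rw [Finsupp.degree_eq_weight_one]; exact hf (mem_support_iff.mp hd)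
  rw [pderiv_monomial]
  by_cases h : d i = 0
  · simp only [h, Nat.cast_zero, mul_zero, map_zero]
    exact isHomogeneous_zero _ _ _
  · apply isHomogeneous_monomial
    have harg : Finsupp.single i 1 + (d - Finsupp.single i 1) = d := by
      ext j
      simp only [Finsupp.add_apply, Finsupp.tsub_apply, Finsupp.single_apply]
      split_ifs with hij
      · subst hij; omega
      · omega
    have h2 := congrArg (Finsupp.weight (1 : Fin 3 → ℕ)) harg
    rw [map_add] at h2
    have hs : (Finsupp.weight (1 : Fin 3 → ℕ)) (Finsupp.single i (1:ℕ)) = 1 := by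
      simp [Finsupp.weight_apply, Finsupp.sum_single_index]
    simp only [Finsupp.degree_eq_weight_one] at hdeg ⊢
    change (Finsupp.weight (1 : Fin 3 → ℕ)) d = n at hdeg
    change (Finsupp.weight (1 : Fin 3 → ℕ)) (d - Finsupp.single i 1) = n - 1
    omega

lemma pdX : ∀ i j : Fin 3, pderiv i (X j : MvPolynomial (Fin 3) ℂ) = if j = i then 1 else 0 := by
  intro i j; rw [pderiv_X]; simp [Pi.single_apply]

lemma quadForm_isHomogeneous (B : Matrix (Fin 3) (Fin 3) ℂ) :
    (quadForm B).IsHomogeneous 2 := by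
  apply IsHomogeneous.sum
  intro j _
  apply IsHomogeneous.sum
  intro k _
  rw [smul_eq_C_mul]
  exact ((isHomogeneous_X ℂ j).mul (isHomogeneous_X ℂ k)).C_mul _

lemma lapQ_isHomogeneous (B : Matrix (Fin 3) (Fin 3) ℂ) {n : ℕ}
    {f : MvPolynomial (Fin 3) ℂ} (hf : f.IsHomogeneous n) :
    (lapQ B f).IsHomogeneous (n - 2) := by
  apply IsHomogeneous.sum
  intro j _
  apply IsHomogeneous.sum
  intro k _
  rw [smul_eq_C_mul]
  have : ((pderiv j) ((pderiv k) f)).IsHomogeneous (n - 2) := by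
    have := pderiv_isHomogeneous (pderiv_isHomogeneous hf k) j
    rwa [Nat.sub_sub] at this
  exact this.C_mul _

lemma lapQ_smul (B : Matrix (Fin 3) (Fin 3) ℂ) (c : ℂ) (f : MvPolynomial (Fin 3) ℂ) :
    lapQ B (c • f) = c • lapQ B f := by
  simp only [lapQ, Derivation.map_smul, Finset.smul_sum]
  refine Finset.sum_congr rfl fun j _ => Finset.sum_congr rfl fun k _ => ?_
  rw [smul_comm]

lemma lapQ_sub (B : Matrix (Fin 3) (Fin 3) ℂ) (f g : MvPolynomial (Fin 3) ℂ) :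
    lapQ B (f - g) = lapQ B f - lapQ B g := by
  simp only [lapQ, map_sub, smul_sub, Finset.sum_sub_distrib]

lemma lapQ_sum (B : Matrix (Fin 3) (Fin 3) ℂ) {ι : Type*} (s : Finset ι)
    (f : ι → MvPolynomial (Fin 3) ℂ) :
    lapQ B (∑ i ∈ s, f i) = ∑ i ∈ s, lapQ B (f i) := by
  simp only [lapQ, map_sum, Finset.smul_sum]
  calc ∑ j : Fin 3, ∑ k : Fin 3, ∑ i ∈ s, B⁻¹ j k • pderiv j (pderiv k (f i))
      = ∑ j : Fin 3, ∑ i ∈ s, ∑ k : Fin 3, B⁻¹ j k • pderiv j (pderiv k (f i)) :=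
        Finset.sum_congr rfl fun j _ => Finset.sum_comm
    _ = ∑ i ∈ s, ∑ j : Fin 3, ∑ k : Fin 3, B⁻¹ j k • pderiv j (pderiv k (f i)) :=
        Finset.sum_comm

lemma lapQ_C (B : Matrix (Fin 3) (Fin 3) ℂ) (c : ℂ) : lapQ B (C c) = 0 := by
  simp [lapQ, pderiv_C]

lemma pderiv_quadForm (B : Matrix (Fin 3) (Fin 3) ℂ) (hB : B.IsSymm) (k : Fin 3) :
    pderiv k (quadForm B) = ∑ a : Fin 3, (2 * B k a) • X a := by
  calc pderiv k (quadForm B)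
      = ∑ j : Fin 3, ∑ l : Fin 3,
          ((if j = k then B j l • X l else 0) + (if l = k then B j l • X j else 0)) := by
        rw [quadForm, map_sum]
        refine Finset.sum_congr rfl fun j _ => ?_
        rw [map_sum]
        refine Finset.sum_congr rfl fun l _ => ?_
        rw [Derivation.map_smul, pderiv_mul, pdX, pdX, smul_add]
        congr 1 <;> split_ifs <;> simp
    _ = (∑ l : Fin 3, B k l • X l) + (∑ j : Fin 3, B j k • X j) := by
        simp only [Finset.sum_add_distrib]
        congr 1
        · rw [Finset.sum_comm]
          simp
        · simp
    _ = ∑ a : Fin 3, (2 * B k a) • X a := by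
        rw [← Finset.sum_add_distrib]
        refine Finset.sum_congr rfl fun a _ => ?_
        rw [hB.apply k a, two_mul, add_smul]

lemma pderiv_pderiv_quadForm (B : Matrix (Fin 3) (Fin 3) ℂ) (hB : B.IsSymm) (j k : Fin 3) :
    pderiv j (pderiv k (quadForm B)) = C (2 * B k j) := by
  rw [pderiv_quadForm B hB k, map_sum]
  simp only [Derivation.map_smul, pdX, smul_ite, smul_zero]
  rw [Finset.sum_ite_eq' Finset.univ j (fun a => (2 * B k a) • (1 : MvPolynomial (Fin 3) ℂ))]
  simp [smul_eq_C_mul]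

theorem lapQ_quadForm_mul (B : Matrix (Fin 3) (Fin 3) ℂ) (hB : B.IsSymm) (hBinv : IsUnit B.det)
    (f : MvPolynomial (Fin 3) ℂ) :
    lapQ B (quadForm B * f) = quadForm B * lapQ B f
      + (4:ℂ) • (∑ i : Fin 3, X i * pderiv i f) + (6:ℂ) • f := by
  have hBB : B⁻¹ * B = 1 := Matrix.nonsing_inv_mul B hBinv
  have hBB' : B * B⁻¹ = 1 := Matrix.mul_nonsing_inv B hBinv
  have expand : ∀ j k : Fin 3, pderiv j (pderiv k (quadForm B * f))
      = C (2 * B k j) * f + pderiv k (quadForm B) * pderiv j f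
        + pderiv j (quadForm B) * pderiv k f + quadForm B * pderiv j (pderiv k f) := by
    intro j k
    rw [pderiv_mul, map_add, pderiv_mul, pderiv_mul, pderiv_pderiv_quadForm B hB]
    ring
  have T1 : ∑ j : Fin 3, ∑ k : Fin 3, B⁻¹ j k • (C (2 * B k j) * f) = (6:ℂ) • f := by
    have key : ∀ j : Fin 3, (∑ k : Fin 3, B⁻¹ j k * B k j) = 1 := by
      intro j
      rw [← Matrix.mul_apply, hBB, Matrix.one_apply_eq]
    calc ∑ j : Fin 3, ∑ k : Fin 3, B⁻¹ j k • (C (2 * B k j) * f)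
        = ∑ j : Fin 3, ∑ k : Fin 3, (2 * (B⁻¹ j k * B k j)) • f := by
          refine Finset.sum_congr rfl fun j _ => Finset.sum_congr rfl fun k _ => ?_
          rw [← smul_eq_C_mul, smul_smul]
          ring_nf
      _ = ∑ j : Fin 3, (2:ℂ) • f := by
          refine Finset.sum_congr rfl fun j _ => ?_
          rw [← Finset.sum_smul, ← Finset.mul_sum, key j, mul_one]
      _ = (6:ℂ) • f := by
          rw [Finset.sum_const]
          simp [← smul_assoc]
          norm_num
  have T2 : ∑ j : Fin 3, ∑ k : Fin 3, B⁻¹ j k • (pderiv k (quadForm B) * pderiv j f)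
      = (2:ℂ) • (∑ i : Fin 3, X i * pderiv i f) := by
    rw [Finset.smul_sum]
    refine Finset.sum_congr rfl fun j _ => ?_
    have key : ∀ a : Fin 3, (∑ k : Fin 3, B⁻¹ j k * (2 * B k a)) = if j = a then 2 else 0 := by
      intro a
      have h1 : (∑ k : Fin 3, B⁻¹ j k * B k a) = (1 : Matrix (Fin 3) (Fin 3) ℂ) j a := by
        rw [← Matrix.mul_apply, hBB]
      calc (∑ k : Fin 3, B⁻¹ j k * (2 * B k a)) = 2 * ∑ k : Fin 3, B⁻¹ j k * B k a := by
            rw [Finset.mul_sum]; refine Finset.sum_congr rfl fun k _ => by ring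
        _ = if j = a then 2 else 0 := by
            rw [h1, Matrix.one_apply]
            split_ifs <;> ring
    calc ∑ k : Fin 3, B⁻¹ j k • (pderiv k (quadForm B) * pderiv j f)
        = ∑ k : Fin 3, ∑ a : Fin 3, (B⁻¹ j k * (2 * B k a)) • (X a * pderiv j f) := by
          refine Finset.sum_congr rfl fun k _ => ?_
          rw [pderiv_quadForm B hB k, Finset.sum_mul, Finset.smul_sum]
          refine Finset.sum_congr rfl fun a _ => ?_
          rw [smul_mul_assoc, smul_smul]
      _ = ∑ a : Fin 3, (∑ k : Fin 3, B⁻¹ j k * (2 * B k a)) • (X a * pderiv j f) := by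
          rw [Finset.sum_comm]
          refine Finset.sum_congr rfl fun a _ => ?_
          rw [Finset.sum_smul]
      _ = (2:ℂ) • (X j * pderiv j f) := by
          simp only [key, ite_smul, zero_smul]
          rw [Finset.sum_ite_eq Finset.univ j (fun a => (2:ℂ) • (X a * pderiv j f))]
          simp
  have T3 : ∑ j : Fin 3, ∑ k : Fin 3, B⁻¹ j k • (pderiv j (quadForm B) * pderiv k f)
      = (2:ℂ) • (∑ i : Fin 3, X i * pderiv i f) := by
    rw [Finset.sum_comm, Finset.smul_sum]
    refine Finset.sum_congr rfl fun k _ => ?_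
    have key : ∀ a : Fin 3, (∑ j : Fin 3, B⁻¹ j k * (2 * B j a)) = if k = a then 2 else 0 := by
      intro a
      have h1 : (∑ j : Fin 3, B a j * B⁻¹ j k) = (1 : Matrix (Fin 3) (Fin 3) ℂ) a k := by
        rw [← Matrix.mul_apply, hBB']
      calc (∑ j : Fin 3, B⁻¹ j k * (2 * B j a)) = 2 * ∑ j : Fin 3, B a j * B⁻¹ j k := by
            rw [Finset.mul_sum]
            refine Finset.sum_congr rfl fun j _ => ?_
            rw [← hB.apply j a]
            ring
        _ = if k = a then 2 else 0 := by
            rw [h1, Matrix.one_apply]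
            rcases eq_or_ne k a with hh | hh
            · subst hh; simp
            · rw [if_neg (Ne.symm hh), if_neg hh, mul_zero]
    calc ∑ j : Fin 3, B⁻¹ j k • (pderiv j (quadForm B) * pderiv k f)
        = ∑ j : Fin 3, ∑ a : Fin 3, (B⁻¹ j k * (2 * B j a)) • (X a * pderiv k f) := by
          refine Finset.sum_congr rfl fun j _ => ?_
          rw [pderiv_quadForm B hB j, Finset.sum_mul, Finset.smul_sum]
          refine Finset.sum_congr rfl fun a _ => ?_
          rw [smul_mul_assoc, smul_smul]
      _ = ∑ a : Fin 3, (∑ j : Fin 3, B⁻¹ j k * (2 * B j a)) • (X a * pderiv k f) := by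
          rw [Finset.sum_comm]
          refine Finset.sum_congr rfl fun a _ => ?_
          rw [Finset.sum_smul]
      _ = (2:ℂ) • (X k * pderiv k f) := by
          simp only [key, ite_smul, zero_smul]
          rw [Finset.sum_ite_eq Finset.univ k (fun a => (2:ℂ) • (X a * pderiv k f))]
          simp
  have T4 : ∑ j : Fin 3, ∑ k : Fin 3, B⁻¹ j k • (quadForm B * pderiv j (pderiv k f))
      = quadForm B * lapQ B f := by
    rw [lapQ, Finset.mul_sum]
    refine Finset.sum_congr rfl fun j _ => ?_
    rw [Finset.mul_sum]
    refine Finset.sum_congr rfl fun k _ => ?_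
    rw [mul_smul_comm]
  calc lapQ B (quadForm B * f)
      = ∑ j : Fin 3, ∑ k : Fin 3, (B⁻¹ j k • (C (2 * B k j) * f)
          + B⁻¹ j k • (pderiv k (quadForm B) * pderiv j f)
          + B⁻¹ j k • (pderiv j (quadForm B) * pderiv k f)
          + B⁻¹ j k • (quadForm B * pderiv j (pderiv k f))) := by
        rw [lapQ]
        refine Finset.sum_congr rfl fun j _ => Finset.sum_congr rfl fun k _ => ?_
        rw [expand j k, smul_add, smul_add, smul_add]
    _ = quadForm B * lapQ B f + (4:ℂ) • (∑ i : Fin 3, X i * pderiv i f) + (6:ℂ) • f := by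
        simp only [Finset.sum_add_distrib]
        rw [T1, T2, T3, T4]
        module

lemma quadForm_ne_zero (B : Matrix (Fin 3) (Fin 3) ℂ) (hB : B.IsSymm) (hBinv : IsUnit B.det) :
    quadForm B ≠ 0 := by
  intro h0
  have h := lapQ_quadForm_mul B hB hBinv 1
  rw [h0] at h
  simp only [lapQ, zero_mul, map_zero, smul_zero, Finset.sum_const_zero, pderiv_one,
    mul_zero, smul_zero, Finset.sum_const_zero, zero_add] at h
  have h1 : ((6:ℂ) • (1 : MvPolynomial (Fin 3) ℂ)) ≠ 0 := by
    rw [smul_eq_C_mul, mul_one]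
    intro hc
    exact (by norm_num : (6:ℂ) ≠ 0) (by simpa using (C_injective (Fin 3) ℂ) (hc.trans (map_zero C).symm))
  exact h1 h.symm

lemma lapQ_pow_mul (B : Matrix (Fin 3) (Fin 3) ℂ) (hB : B.IsSymm) (hBinv : IsUnit B.det)
    (s d : ℕ) (g : MvPolynomial (Fin 3) ℂ) (hg : g.IsHomogeneous d) :
    lapQ B (quadForm B ^ (s+1) * g) = quadForm B ^ (s+1) * lapQ B g
      + ((4*d*(s+1) + 4*(s+1)^2 + 2*(s+1) : ℕ) : ℂ) • (quadForm B ^ s * g) := by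
  induction s with
  | zero =>
    have h := lapQ_quadForm_mul B hB hBinv g
    rw [euler_id hg] at h
    rw [pow_one, pow_zero, one_mul, h, smul_smul, add_assoc, ← add_smul]
    congr 1
    push_cast
    ring
  | succ s IH =>
    have hpow : quadForm B ^ (s+1+1) * g = quadForm B * (quadForm B ^ (s+1) * g) := by ring
    rw [hpow, lapQ_quadForm_mul B hB hBinv _]
    have hhom : (quadForm B ^ (s+1) * g).IsHomogeneous (2*(s+1) + d) :=
      ((quadForm_isHomogeneous B).pow (s+1)).mul hg
    rw [euler_id hhom, IH]
    simp only [smul_eq_C_mul]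
    push_cast
    simp only [map_add, map_mul, map_pow, map_ofNat, map_one]
    ring

set_option maxHeartbeats 1000000 in
lemma key_homog (B : Matrix (Fin 3) (Fin 3) ℂ) (hB : B.IsSymm) (hBinv : IsUnit B.det) :
    ∀ d : ℕ, ∀ g : MvPolynomial (Fin 3) ℂ, g.IsHomogeneous d →
      ∀ s : ℕ, lapQ B (quadForm B ^ (s+1) * g) = 0 → g = 0 := by
  intro d
  induction d using Nat.strong_induction_on with
  | _ d IH =>
    intro g hg s h0
    have h1 := h0
    rw [lapQ_pow_mul B hB hBinv s d g hg] at h1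
    set a : ℂ := ((4*d*(s+1) + 4*(s+1)^2 + 2*(s+1) : ℕ) : ℂ) with ha
    have ha0 : a ≠ 0 := by
      rw [ha]
      exact Nat.cast_ne_zero.mpr (by positivity)
    have hQ : quadForm B ≠ 0 := quadForm_ne_zero B hB hBinv
    have hfac : quadForm B ^ s * (quadForm B * lapQ B g + a • g) = 0 := by
      rw [mul_add, mul_smul_comm, ← mul_assoc, ← pow_succ]
      exact h1
    have hkey : quadForm B * lapQ B g + a • g = 0 := by
      rcases mul_eq_zero.mp hfac with h | h
      · exact absurd h (pow_ne_zero s hQ)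
      · exact h
    by_cases hL : lapQ B g = 0
    · rw [hL, mul_zero, zero_add] at hkey
      rcases smul_eq_zero.mp hkey with h | h
      · exact absurd h ha0
      · exact h
    · by_cases hgne : g = 0
      · exact hgne
      exfalso
      have hLh : (lapQ B g).IsHomogeneous (d - 2) := lapQ_isHomogeneous B hg
      have hQL : quadForm B * lapQ B g = (-a) • g := by
        rw [neg_smul]
        exact eq_neg_of_add_eq_zero_left hkey
      have hQLne : quadForm B * lapQ B g ≠ 0 := by
        rw [hQL]
        simp only [ne_eq, smul_eq_zero, not_or, neg_eq_zero]
        exact ⟨ha0, hgne⟩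
      have hdeg2 : 2 + (d - 2) = d := by
        have hh1 : (quadForm B * lapQ B g).IsHomogeneous (2 + (d - 2)) :=
          (quadForm_isHomogeneous B).mul hLh
        have hh2 : (quadForm B * lapQ B g).IsHomogeneous d := by
          rw [hQL, smul_eq_C_mul]
          exact hg.C_mul _
        exact hh1.inj_right hh2 hQLne
      have hnew : lapQ B (quadForm B ^ (s+2) * lapQ B g) = 0 := by
        have hrw : quadForm B ^ (s+2) * lapQ B g = (-a) • (quadForm B ^ (s+1) * g) := by
          calc quadForm B ^ (s+2) * lapQ B g
              = quadForm B ^ (s+1) * (quadForm B * lapQ B g) := by ring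
            _ = (-a) • (quadForm B ^ (s+1) * g) := by
                rw [hQL, mul_smul_comm]
        rw [hrw, lapQ_smul, h0, smul_zero]
      exact hL (IH (d - 2) (by omega) (lapQ B g) hLh (s+1) hnew)

end LapQAux

/-- For a nondegenerate quadratic form `Q` in three variables:
if `Δ_Q((Q − 1)·S) = 0` then `S = 0`; i.e. the kernel of `Δ_Q` meets the ideal
`⟨Q − 1⟩` only in `0`. -/
theorem lapQ_ker_inter_ideal (B : Matrix (Fin 3) (Fin 3) ℂ)
    (hB : B.IsSymm) (hBinv : IsUnit B.det)
    (S : MvPolynomial (Fin 3) ℂ)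
    (h : lapQ B ((quadForm B - 1) * S) = 0) : S = 0 := by
  by_contra hS
  set d := S.totalDegree with hd
  have hsupp : S.support.Nonempty := support_nonempty.mpr hS
  obtain ⟨m, hm, hmd⟩ :=
    Finset.exists_mem_eq_sup S.support hsupp (fun s : Fin 3 →₀ ℕ => s.sum fun _ e => e)
  have hSd : homogeneousComponent d S ≠ 0 := by
    intro hzero
    have hco : coeff m (homogeneousComponent d S) = coeff m S := by
      rw [coeff_homogeneousComponent, if_pos]
      rw [hd, MvPolynomial.totalDegree, hmd]
      rfl
    rw [hzero, coeff_zero] at hco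
    exact (mem_support_iff.mp hm) hco.symm
  have hdecomp : (quadForm B - 1) * S = ∑ n ∈ Finset.range (d+1),
      (quadForm B * homogeneousComponent n S - homogeneousComponent n S) := by
    have hsum : (∑ n ∈ Finset.range (d+1), homogeneousComponent n S) = S :=
      sum_homogeneousComponent S
    calc (quadForm B - 1) * S = quadForm B * S - S := by ring
      _ = quadForm B * (∑ n ∈ Finset.range (d+1), homogeneousComponent n S)
          - (∑ n ∈ Finset.range (d+1), homogeneousComponent n S) := by rw [hsum]
      _ = ∑ n ∈ Finset.range (d+1),
          (quadForm B * homogeneousComponent n S - homogeneousComponent n S) := by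
        rw [Finset.mul_sum, Finset.sum_sub_distrib]
  have h2 := h
  rw [hdecomp, LapQAux.lapQ_sum] at h2
  have h3 := congrArg (homogeneousComponent d) h2
  rw [map_sum, map_zero] at h3
  have hQSn : ∀ n : ℕ, (lapQ B (quadForm B * homogeneousComponent n S)).IsHomogeneous n := by
    intro n
    have hhom : (quadForm B * homogeneousComponent n S).IsHomogeneous (2 + n) :=
      (LapQAux.quadForm_isHomogeneous B).mul (homogeneousComponent_isHomogeneous _ _)
    have := LapQAux.lapQ_isHomogeneous B hhom
    rwa [Nat.add_sub_cancel_left] at this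
  have hterm : ∀ n ∈ Finset.range (d+1), n ≠ d →
      homogeneousComponent d
        (lapQ B (quadForm B * homogeneousComponent n S - homogeneousComponent n S)) = 0 := by
    intro n hn hne
    have hnd : n < d := lt_of_le_of_ne (Nat.lt_succ_iff.mp (Finset.mem_range.mp hn)) hne
    rw [LapQAux.lapQ_sub, map_sub]
    have e1 : homogeneousComponent d (lapQ B (quadForm B * homogeneousComponent n S)) = 0 := by
      rw [homogeneousComponent_of_mem ((mem_homogeneousSubmodule _ _).mpr (hQSn n)),
        if_neg (Ne.symm hne)]
    have e2 : homogeneousComponent d (lapQ B (homogeneousComponent n S)) = 0 := by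
      have habove : (lapQ B (homogeneousComponent n S)).IsHomogeneous (n - 2) :=
        LapQAux.lapQ_isHomogeneous B (homogeneousComponent_isHomogeneous _ _)
      rw [homogeneousComponent_of_mem ((mem_homogeneousSubmodule _ _).mpr habove),
        if_neg (by omega)]
    rw [e1, e2, sub_zero]
  rw [Finset.sum_eq_single_of_mem d (Finset.self_mem_range_succ d) hterm] at h3
  rw [LapQAux.lapQ_sub, map_sub] at h3
  have e1 : homogeneousComponent d (lapQ B (quadForm B * homogeneousComponent d S))
      = lapQ B (quadForm B * homogeneousComponent d S) := by
    rw [homogeneousComponent_of_mem ((mem_homogeneousSubmodule _ _).mpr (hQSn d)), if_pos rfl]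
  have e2 : homogeneousComponent d (lapQ B (homogeneousComponent d S)) = 0 := by
    rcases Nat.eq_zero_or_pos d with h0 | h0
    · have hz : lapQ B (homogeneousComponent d S) = 0 := by
        rw [h0, homogeneousComponent_zero, LapQAux.lapQ_C]
      rw [hz, map_zero]
    · have habove : (lapQ B (homogeneousComponent d S)).IsHomogeneous (d - 2) :=
        LapQAux.lapQ_isHomogeneous B (homogeneousComponent_isHomogeneous _ _)
      rw [homogeneousComponent_of_mem ((mem_homogeneousSubmodule _ _).mpr habove),
        if_neg (by omega)]
  rw [e1, e2, sub_zero] at h3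
  have := LapQAux.key_homog B hB hBinv d (homogeneousComponent d S)
    (homogeneousComponent_isHomogeneous _ _) 0 (by rw [pow_one]; exact h3)
  exact hSd this
end

section
/- Every nonzero homogeneous polynomial function of degree d on the complex projective conic {Q = 0} (i.e., every nonzero element of V(d)/Q·V(d−2) for Q an irreducible quadratic form in three variables) is represented by a product of d linear forms. Equivalently, the restriction map from completely factorable degree-d homogeneous polynomials to V(d)/Q·V(d−2) is surjective onto the nonzero elements. -/
open MvPolynomial

noncomputable section ConicAux

/-- aeval into the base field is eval. -/
lemma aux_aeval_eq_eval {σ : Type*} (x : σ → ℂ) (p : MvPolynomial σ ℂ) :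
    aeval x p = eval x p :=
  RingHom.congr_fun (coe_aeval_eq_eval x) p

/-- Evaluation of a substitution. -/
lemma aux_eval_aeval {σ τ : Type*} (x : τ → ℂ) (g : σ → MvPolynomial τ ℂ)
    (p : MvPolynomial σ ℂ) :
    eval x (aeval g p) = eval (fun i => eval x (g i)) p := by
  have h := comp_aeval_apply (φ := (aeval x : MvPolynomial τ ℂ →ₐ[ℂ] ℂ)) (f := g) p
  rw [aux_aeval_eq_eval] at h
  rw [h, aux_aeval_eq_eval]
  have h2 : (fun i => aeval x (g i)) = (fun i => eval x (g i)) :=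
    funext fun i => aux_aeval_eq_eval x (g i)
  rw [h2]

lemma aux_deg2 (dd : Fin 2 →₀ ℕ) : dd.degree = dd 0 + dd 1 := by
  rw [Finsupp.degree, ← Fin.sum_univ_two (f := fun i => dd i)]
  exact Finset.sum_subset (Finset.subset_univ _)
    (fun i _ hi => Finsupp.notMem_support_iff.mp hi)

lemma aux_deg_of_mem {F : MvPolynomial (Fin 2) ℂ} {n : ℕ} (hF : F.IsHomogeneous n)
    {dd : Fin 2 →₀ ℕ} (h : dd ∈ F.support) : dd 0 + dd 1 = n := by
  have h2 := hF (mem_support_iff.mp h)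
  rw [← aux_deg2]
  rwa [Finsupp.degree_eq_weight_one]

lemma aux_phi_monomial (dd : Fin 2 →₀ ℕ) (c : ℂ) :
    aeval ![Polynomial.X, (1 : Polynomial ℂ)] (monomial dd c)
      = Polynomial.C c * Polynomial.X ^ (dd 0) := by
  rw [aeval_monomial]
  have h : (dd.prod fun i k => (![Polynomial.X, (1 : Polynomial ℂ)] i) ^ k)
      = Polynomial.X ^ dd 0 := by
    rw [Finsupp.prod_fintype _ _ (fun i => pow_zero _), Fin.prod_univ_two]
    simp
  rw [h]
  rfl

lemma aux_phi_sum (F : MvPolynomial (Fin 2) ℂ) :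
    aeval ![Polynomial.X, (1 : Polynomial ℂ)] F
      = ∑ dd ∈ F.support, Polynomial.C (coeff dd F) * Polynomial.X ^ (dd 0) := by
  conv_lhs => rw [F.as_sum]
  rw [map_sum]
  exact Finset.sum_congr rfl fun dd _ => aux_phi_monomial dd _

/-- Injectivity of dehomogenization on homogeneous binary forms. -/
lemma aux_phi_inj {n : ℕ} {F : MvPolynomial (Fin 2) ℂ} (hF : F.IsHomogeneous n)
    (h : aeval ![Polynomial.X, (1 : Polynomial ℂ)] F = 0) : F = 0 := by
  by_contra hF0
  obtain ⟨d0, hd0⟩ := Finset.nonempty_iff_ne_empty.mpr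
    (fun he => hF0 (support_eq_empty.mp he))
  have hco : (aeval ![Polynomial.X, (1 : Polynomial ℂ)] F).coeff (d0 0) = coeff d0 F := by
    rw [aux_phi_sum, Polynomial.finset_sum_coeff]
    rw [Finset.sum_eq_single d0]
    · simp [Polynomial.coeff_C_mul, Polynomial.coeff_X_pow]
    · intro dd hdd hne
      simp only [Polynomial.coeff_C_mul, Polynomial.coeff_X_pow]
      rw [if_neg, mul_zero]
      intro heq
      apply hne
      have e1 := aux_deg_of_mem hF hdd
      have e2 := aux_deg_of_mem hF hd0
      have hx0 : dd 0 = d0 0 := heq.symm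
      have hx1 : dd 1 = d0 1 := by omega
      ext i
      fin_cases i
      · simpa using hx0
      · simpa using hx1
    · intro hnot; exact absurd hd0 hnot
  rw [h, Polynomial.coeff_zero] at hco
  exact mem_support_iff.mp hd0 hco.symm


/-- The three degree-2 monomials in two variables. -/
def aux_m1 : MvPolynomial (Fin 2) ℂ := monomial (Finsupp.single 0 2) 1
def aux_m2 : MvPolynomial (Fin 2) ℂ := monomial (Finsupp.single 0 1 + Finsupp.single 1 1) 1
def aux_m3 : MvPolynomial (Fin 2) ℂ := monomial (Finsupp.single 1 2) 1

lemma aux_class2 (dd : Fin 2 →₀ ℕ) (h : dd 0 + dd 1 = 2) :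
    dd = Finsupp.single 0 2 ∨ dd = Finsupp.single 0 1 + Finsupp.single 1 1
      ∨ dd = Finsupp.single 1 2 := by
  have h0 : dd 0 = 0 ∨ dd 0 = 1 ∨ dd 0 = 2 := by omega
  rcases h0 with h0 | h0 | h0
  · right; right
    have h1 : dd 1 = 2 := by omega
    ext i; fin_cases i <;> simp [Finsupp.single_apply, h0, h1]
  · right; left
    have h1 : dd 1 = 1 := by omega
    ext i; fin_cases i <;> simp [Finsupp.single_apply, h0, h1]
  · left
    have h1 : dd 1 = 0 := by omega
    ext i; fin_cases i <;> simp [Finsupp.single_apply, h0, h1]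

/-- Every homogeneous binary quadratic lies in the span of the three monomials. -/
lemma aux_span2 {F : MvPolynomial (Fin 2) ℂ} (hF : F.IsHomogeneous 2) :
    F ∈ Submodule.span ℂ ({aux_m1, aux_m2, aux_m3} : Set (MvPolynomial (Fin 2) ℂ)) := by
  rw [F.as_sum]
  apply Submodule.sum_mem
  intro dd hdd
  have hcl := aux_class2 dd (aux_deg_of_mem hF hdd)
  have hsm : ∀ c : ℂ, ∀ m : Fin 2 →₀ ℕ, monomial m c = c • monomial m (1 : ℂ) := by
    intro c m; rw [smul_monomial, smul_eq_mul, mul_one]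
  rcases hcl with hc | hc | hc <;> rw [hc, hsm] <;>
    exact Submodule.smul_mem _ _ (Submodule.subset_span (by simp [aux_m1, aux_m2, aux_m3]))

lemma aux_eval_m (x : Fin 2 → ℂ) :
    eval x aux_m1 = x 0 ^ 2 ∧ eval x aux_m2 = x 0 * x 1 ∧ eval x aux_m3 = x 1 ^ 2 := by
  refine ⟨?_, ?_, ?_⟩ <;>
    simp [aux_m1, aux_m2, aux_m3, eval_monomial, Finsupp.prod_add_index',
      Finsupp.prod_single_index, pow_add]

/-- Decomposition of a homogeneous binary quadratic. -/
lemma aux_decomp2 {F : MvPolynomial (Fin 2) ℂ} (hF : F.IsHomogeneous 2) :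
    ∃ a b c : ℂ, ∀ x : Fin 2 → ℂ, eval x F = a * x 0 ^ 2 + b * (x 0 * x 1) + c * x 1 ^ 2 := by
  have h := aux_span2 hF
  rw [Submodule.mem_span_insert] at h
  obtain ⟨a, z, hz, rfl⟩ := h
  rw [Submodule.mem_span_insert] at hz
  obtain ⟨b, w, hw, rfl⟩ := hz
  rw [Submodule.mem_span_singleton] at hw
  obtain ⟨c, rfl⟩ := hw
  refine ⟨a, b, c, fun x => ?_⟩
  obtain ⟨e1, e2, e3⟩ := aux_eval_m x
  simp [e1, e2, e3]
  ring


/-- Splitting of nonzero homogeneous binary forms into linear factors. -/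
lemma aux_split {n : ℕ} (hn : 1 ≤ n) {F : MvPolynomial (Fin 2) ℂ}
    (hF : F.IsHomogeneous n) (hF0 : F ≠ 0) :
    ∃ L : Fin n → MvPolynomial (Fin 2) ℂ,
      (∀ i, (L i).IsHomogeneous 1) ∧ F = ∏ i, L i := by
  set Φ : MvPolynomial (Fin 2) ℂ →ₐ[ℂ] Polynomial ℂ :=
    aeval ![Polynomial.X, 1] with hPhi
  set g : Polynomial ℂ := Φ F with hg
  have hg0 : g ≠ 0 := fun h => hF0 (aux_phi_inj hF h)
  have hcard : g.roots.card = g.natDegree :=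
    (Polynomial.splits_iff_card_roots).mp (IsAlgClosed.splits g)
  set m := g.natDegree with hm
  have hmn : m ≤ n := by
    rw [hm, hg, hPhi, aux_phi_sum]
    apply Polynomial.natDegree_sum_le_of_forall_le
    intro dd hdd
    refine le_trans (Polynomial.natDegree_C_mul_le _ _) ?_
    rw [Polynomial.natDegree_X_pow]
    have := aux_deg_of_mem hF hdd
    omega
  set Mf : Multiset (MvPolynomial (Fin 2) ℂ) :=
    g.roots.map (fun r => X 0 - C r * X 1) + Multiset.replicate (n - m) (X 1) with hMf
  have hMfcard : Multiset.card Mf = n := by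
    rw [hMf]; simp [hcard]; omega
  have hMfmem : ∀ A ∈ Mf, A.IsHomogeneous 1 := by
    intro A hA
    rw [hMf, Multiset.mem_add] at hA
    rcases hA with hA | hA
    · obtain ⟨r, _, rfl⟩ := Multiset.mem_map.mp hA
      exact (isHomogeneous_X _ _).sub ((isHomogeneous_X _ _).C_mul _)
    · rw [Multiset.eq_of_mem_replicate hA]
      exact isHomogeneous_X _ _
  set LM := Mf.toList with hLM
  have hlen : LM.length = n := by rw [hLM, Multiset.length_toList, hMfcard]
  set i0 : Fin n := ⟨0, hn⟩ with hi0
  set c := g.leadingCoeff with hc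
  set L : Fin n → MvPolynomial (Fin 2) ℂ :=
    fun i => (if i = i0 then C c else 1) * LM.get (Fin.cast hlen.symm i) with hL
  have hLmem : ∀ i : Fin n, LM.get (Fin.cast hlen.symm i) ∈ Mf := by
    intro i
    exact Multiset.mem_toList.mp (LM.get_mem (Fin.cast hlen.symm i))
  have hLhom : ∀ i, (L i).IsHomogeneous 1 := by
    intro i
    have h1 := hMfmem _ (hLmem i)
    show ((if i = i0 then C c else 1) * LM.get (Fin.cast hlen.symm i)).IsHomogeneous 1
    by_cases hii : i = i0
    · rw [if_pos hii]; exact h1.C_mul _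
    · rw [if_neg hii, one_mul]; exact h1
  have hπ : (∏ i, L i).IsHomogeneous n := by
    have := MvPolynomial.IsHomogeneous.prod Finset.univ L (fun _ => 1)
      (fun i _ => hLhom i)
    simpa using this
  have hprodsplit : (∏ i, L i) = C c * Mf.prod := by
    rw [hL, Finset.prod_mul_distrib]
    congr 1
    · simp
    · calc (∏ i : Fin n, LM.get (Fin.cast hlen.symm i))
          = ∏ j : Fin LM.length, LM.get j := Equiv.prod_comp (finCongr hlen.symm) _
        _ = LM.prod := by rw [← List.prod_ofFn, List.ofFn_get]
        _ = Mf.prod := by rw [hLM, Multiset.prod_toList]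
  have hPhiprod : Φ (∏ i, L i) = g := by
    rw [hprodsplit, map_mul, map_multiset_prod]
    have hmap : Mf.map Φ = g.roots.map (fun r => Polynomial.X - Polynomial.C r)
        + Multiset.replicate (n - m) 1 := by
      rw [hMf, Multiset.map_add, Multiset.map_map, Multiset.map_replicate]
      congr 1
      · apply Multiset.map_congr rfl
        intro r _
        simp [hPhi]
      · congr 1
        simp [hPhi]
    rw [hmap, Multiset.prod_add, Multiset.prod_replicate, one_pow, mul_one]
    have hCc : Φ (C c) = Polynomial.C c := by
      rw [hPhi]; simp [Polynomial.algebraMap_eq]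
    rw [hCc]
    exact Polynomial.C_leadingCoeff_mul_prod_multiset_X_sub_C hcard
  refine ⟨L, hLhom, ?_⟩
  have hsub : Φ (F - ∏ i, L i) = 0 := by
    rw [map_sub, hPhiprod, ← hg, sub_self]
  exact sub_eq_zero.mp (aux_phi_inj (hF.sub hπ) hsub)

/-- The polar form of `Q`. -/
def polC (Q : MvPolynomial (Fin 3) ℂ) (u v : Fin 3 → ℂ) : ℂ :=
  eval (u + v) Q - eval u Q - eval v Q

lemma polC_symm (Q : MvPolynomial (Fin 3) ℂ) (u v : Fin 3 → ℂ) :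
    polC Q u v = polC Q v u := by
  rw [polC, polC, add_comm u v]
  ring

/-- Master identity for evaluation of a quadratic form on a pencil. -/
lemma aux_master {Q : MvPolynomial (Fin 3) ℂ} (hQh : Q.IsHomogeneous 2)
    (a b : Fin 3 → ℂ) (s t : ℂ) :
    eval (s • a + t • b) Q
      = s ^ 2 * eval a Q + s * t * polC Q a b + t ^ 2 * eval b Q := by
  set G := aeval (fun i => C (a i) * X 0 + C (b i) * X 1 :
    Fin 3 → MvPolynomial (Fin 2) ℂ) Q with hG
  have hGh : G.IsHomogeneous 2 := by
    have h2 := hQh.aeval _ (fun i =>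
      ((isHomogeneous_X ℂ (0 : Fin 2)).C_mul (a i)).add ((isHomogeneous_X ℂ (1 : Fin 2)).C_mul (b i)))
    rw [hG]
    simpa only [one_mul] using h2
  have hEv : ∀ u v : ℂ, eval ![u, v] G = eval (u • a + v • b) Q := by
    intro u v
    rw [hG, aux_eval_aeval]
    have e : (fun i => eval ![u, v] (C (a i) * X 0 + C (b i) * X 1)) = u • a + v • b := by
      funext i
      simp
      ring
    rw [e]
  obtain ⟨α, β, γ, hev⟩ := aux_decomp2 hGh
  have e10 : eval a Q = α := by
    have h1 := (hEv 1 0).symm.trans (hev ![1, 0])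
    simpa using h1
  have e01 : eval b Q = γ := by
    have h1 := (hEv 0 1).symm.trans (hev ![0, 1])
    simpa using h1
  have e11 : eval (a + b) Q = α + β + γ := by
    have h1 := (hEv 1 1).symm.trans (hev ![1, 1])
    simpa using h1
  have epol : polC Q a b = β := by
    rw [polC, e10, e01, e11]; ring
  rw [← hEv s t, hev ![s, t], e10, e01, epol]
  simp
  ring

lemma aux_eval_zero {Q : MvPolynomial (Fin 3) ℂ} (hQh : Q.IsHomogeneous 2) :
    eval (0 : Fin 3 → ℂ) Q = 0 := by
  have h := aux_master hQh 0 0 0 0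
  simpa using h

lemma aux_eval_smul_sq {Q : MvPolynomial (Fin 3) ℂ} (hQh : Q.IsHomogeneous 2)
    (t : ℂ) (v : Fin 3 → ℂ) : eval (t • v) Q = t ^ 2 * eval v Q := by
  have e : t • v = t • v + (0 : ℂ) • v := by simp
  rw [e, aux_master hQh v v t 0]
  ring

lemma polC_smul {Q : MvPolynomial (Fin 3) ℂ} (hQh : Q.IsHomogeneous 2)
    (u v : Fin 3 → ℂ) (t : ℂ) : polC Q u (t • v) = t * polC Q u v := by
  show eval (u + t • v) Q - eval u Q - eval (t • v) Q = t * polC Q u v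
  have e : u + t • v = (1 : ℂ) • u + t • v := by rw [one_smul]
  rw [e, aux_master hQh u v 1 t, aux_eval_smul_sq hQh t v]
  ring

lemma polC_expand {Q : MvPolynomial (Fin 3) ℂ} (hQh : Q.IsHomogeneous 2)
    (x u w : Fin 3 → ℂ) (t : ℂ) :
    polC Q x (u + t • w) = polC Q x u + t * (polC Q (x + u) w - polC Q u w) := by
  show eval (x + (u + t • w)) Q - eval x Q - eval (u + t • w) Q = _
  have e1 : x + (u + t • w) = (1 : ℂ) • (x + u) + t • w := by
    rw [one_smul, add_assoc]
  have e2 : u + t • w = (1 : ℂ) • u + t • w := by rw [one_smul]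
  rw [e1, aux_master hQh (x + u) w 1 t, e2, aux_master hQh u w 1 t]
  have e3 : polC Q x u = eval (x + u) Q - eval x Q - eval u Q := rfl
  rw [e3]
  ring

lemma polC_iden {Q : MvPolynomial (Fin 3) ℂ} (hQh : Q.IsHomogeneous 2)
    (x u w : Fin 3 → ℂ) (t : ℂ) :
    t * polC Q x (u + w) = t * (polC Q x u + polC Q w x)
      + t ^ 2 * (polC Q (w + x) u - polC Q x u - polC Q w u) := by
  have a1 : polC Q x (t • u) = t * polC Q x u := polC_smul hQh x u t
  have a2 : polC Q (t • u) w = t * polC Q w u := by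
    rw [polC_symm]; exact polC_smul hQh w u t
  have a3 : polC Q (x + t • u) w = polC Q w x + t * (polC Q (w + x) u - polC Q x u) := by
    rw [polC_symm]; exact polC_expand hQh w x u t
  calc t * polC Q x (u + w) = polC Q x (t • (u + w)) := (polC_smul hQh x (u + w) t).symm
    _ = polC Q x (t • u + t • w) := by rw [smul_add]
    _ = polC Q x (t • u) + t * (polC Q (x + t • u) w - polC Q (t • u) w) :=
        polC_expand hQh x (t • u) w t
    _ = _ := by rw [a1, a2, a3]; ring

lemma polC_add {Q : MvPolynomial (Fin 3) ℂ} (hQh : Q.IsHomogeneous 2)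
    (x u w : Fin 3 → ℂ) : polC Q x (u + w) = polC Q x u + polC Q x w := by
  have h1 := polC_iden hQh x u w 1
  have h2 := polC_iden hQh x u w (-1)
  have hs : polC Q w x = polC Q x w := polC_symm Q w x
  linear_combination (h1 - h2) / 2 + hs

lemma polC_self {Q : MvPolynomial (Fin 3) ℂ} (hQh : Q.IsHomogeneous 2)
    (p : Fin 3 → ℂ) : polC Q p p = 2 * eval p Q := by
  show eval (p + p) Q - eval p Q - eval p Q = 2 * eval p Q
  have e : p + p = (2 : ℂ) • p + (0 : ℂ) • p := by
    rw [zero_smul, add_zero, two_smul]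
  rw [e, aux_master hQh p p 2 0]
  ring

lemma aux_not_unit {A : MvPolynomial (Fin 3) ℂ} (hA : A.IsHomogeneous 1) :
    ¬ IsUnit A := by
  intro h
  have h0 : eval (0 : Fin 3 → ℂ) A = 0 := by
    rw [eval_zero, constantCoeff_eq]
    exact hA.coeff_eq_zero (by simp)
  have := h.map (eval (0 : Fin 3 → ℂ))
  rw [h0] at this
  exact not_isUnit_zero this

/-- `Q` cannot divide a nonzero "linear-scaling" polynomial. -/
lemma aux_ndvd {Q R : MvPolynomial (Fin 3) ℂ} (hQh : Q.IsHomogeneous 2)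
    (hR0 : R ≠ 0)
    (hscal : ∀ (t : ℂ) (v : Fin 3 → ℂ), eval (t • v) R = t * eval v R) :
    ¬ Q ∣ R := by
  rintro ⟨h, rfl⟩
  obtain ⟨v, hv⟩ : ∃ v : Fin 3 → ℂ, eval v (Q * h) ≠ 0 := by
    by_contra hall
    push_neg at hall
    exact hR0 (MvPolynomial.funext fun x => by rw [hall x, map_zero])
  set hv' : Polynomial ℂ := aeval (fun i => Polynomial.C (v i) * Polynomial.X) h with hhv
  have hev : ∀ t : ℂ, eval (t • v) h = Polynomial.eval t hv' := by
    intro t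
    have h2 := comp_aeval_apply (φ := (Polynomial.aeval t : Polynomial ℂ →ₐ[ℂ] ℂ))
      (f := fun i => Polynomial.C (v i) * Polynomial.X) h
    have h3 : (Polynomial.aeval t : Polynomial ℂ →ₐ[ℂ] ℂ) hv' = Polynomial.eval t hv' := by
      rw [← Polynomial.coe_aeval_eq_eval]
    calc eval (t • v) h
        = eval (fun i => (Polynomial.aeval t) (Polynomial.C (v i) * Polynomial.X)) h := by
          have e : (fun i => (Polynomial.aeval t) (Polynomial.C (v i) * Polynomial.X))
              = t • v := by
            funext i
            simp only [map_mul, Polynomial.aeval_C, Polynomial.aeval_X,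
              Algebra.algebraMap_self, RingHom.id_apply, Pi.smul_apply, smul_eq_mul]
            ring
          rw [e]
      _ = aeval (fun i => (Polynomial.aeval t) (Polynomial.C (v i) * Polynomial.X)) h :=
          (aux_aeval_eq_eval _ _).symm
      _ = (Polynomial.aeval t : Polynomial ℂ →ₐ[ℂ] ℂ) hv' := h2.symm
      _ = Polynomial.eval t hv' := h3
  have hfun : (Polynomial.C (eval v (Q * h)) * Polynomial.X : Polynomial ℂ)
      = Polynomial.C (eval v Q) * hv' * Polynomial.X ^ 2 := by
    apply Polynomial.funext
    intro t
    simp only [Polynomial.eval_mul, Polynomial.eval_C, Polynomial.eval_X, Polynomial.eval_pow]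
    have h3 := hscal t v
    rw [eval_mul, eval_mul, aux_eval_smul_sq hQh t v, hev t] at h3
    rw [eval_mul]
    linear_combination -h3
  have hco := congrArg (fun p : Polynomial ℂ => p.coeff 1) hfun
  simp only [Polynomial.coeff_C_mul, Polynomial.coeff_X_one, mul_one,
    Polynomial.coeff_mul_X_pow'] at hco
  norm_num at hco
  apply hv
  rw [eval_mul]
  rcases hco with hc | hc <;> simp [hc]


/-- If the polar of `p` vanishes identically, `Q` is reducible: contradiction. -/
lemma aux_nondeg {Q : MvPolynomial (Fin 3) ℂ} (hQh : Q.IsHomogeneous 2)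
    (hQirr : Irreducible Q) (p : Fin 3 → ℂ) (hp : eval p Q = 0)
    (k i₁ i₂ : Fin 3) (hpk : p k ≠ 0)
    (hcov : ∀ i, i = i₁ ∨ i = i₂ ∨ i = k) (h1k : i₁ ≠ k) (h2k : i₂ ≠ k) (h12 : i₁ ≠ i₂)
    (hdeg : ∀ v, polC Q p v = 0) : False := by
  classical
  set σf : Fin 3 → MvPolynomial (Fin 3) ℂ :=
    fun i => X i - C (p i * (p k)⁻¹) * X k with hσ
  have hσk : σf k = 0 := by
    rw [hσ]
    simp [mul_inv_cancel₀ hpk]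
  have hQσ : aeval σf Q = Q := by
    apply MvPolynomial.funext
    intro v
    rw [aux_eval_aeval]
    have e : (fun i => eval v (σf i)) = v + (-(v k * (p k)⁻¹)) • p := by
      funext i
      rw [hσ]
      simp
      ring
    rw [e]
    have e2 : v + (-(v k * (p k)⁻¹)) • p
        = (1 : ℂ) • v + (-(v k * (p k)⁻¹)) • p := by rw [one_smul]
    rw [e2, aux_master hQh v p 1 _, hp, polC_symm, hdeg]
    ring
  set ρ : Fin 3 → MvPolynomial (Fin 2) ℂ :=
    fun i => if i = i₁ then X 0 else if i = i₂ then X 1 else 0 with hρ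
  set G := aeval ρ Q with hGdef
  have hGh : G.IsHomogeneous 2 := by
    have h2 := hQh.aeval ρ (fun i => by
      simp only [hρ]
      split_ifs <;>
        first
          | exact isHomogeneous_X _ _
          | exact isHomogeneous_zero _ _ 1)
    rw [hGdef]
    simpa only [one_mul] using h2
  have hτG : aeval ![σf i₁, σf i₂] G = Q := by
    rw [hGdef]
    have hcomp := comp_aeval_apply (φ := (aeval ![σf i₁, σf i₂] :
      MvPolynomial (Fin 2) ℂ →ₐ[ℂ] MvPolynomial (Fin 3) ℂ)) (f := ρ) Q
    rw [hcomp]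
    have e : (fun i => aeval ![σf i₁, σf i₂] (ρ i)) = σf := by
      funext i
      simp only [hρ]
      rcases hcov i with h | h | h
      · subst h
        rw [if_pos rfl]
        simp
      · subst h
        rw [if_neg (fun hh => h12 hh.symm), if_pos rfl]
        simp
      · subst h
        rw [if_neg (fun hh => h1k hh.symm), if_neg (fun hh => h2k hh.symm),
          map_zero, hσk]
    rw [e, hQσ]
  have hG0 : G ≠ 0 := by
    intro h0
    apply hQirr.ne_zero
    rw [← hτG, h0, map_zero]
  obtain ⟨L2, hL2h, hL2e⟩ := aux_split (by norm_num) hGh hG0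
  have hQfact : Q = aeval ![σf i₁, σf i₂] (L2 0) * aeval ![σf i₁, σf i₂] (L2 1) := by
    rw [← hτG, hL2e, Fin.prod_univ_two, map_mul]
  have hwh : ∀ j : Fin 2, (![σf i₁, σf i₂] j).IsHomogeneous 1 := by
    intro j
    have hs1 : (σf i₁).IsHomogeneous 1 := by
      rw [hσ]
      exact (isHomogeneous_X _ _).sub ((isHomogeneous_X _ _).C_mul _)
    have hs2 : (σf i₂).IsHomogeneous 1 := by
      rw [hσ]
      exact (isHomogeneous_X _ _).sub ((isHomogeneous_X _ _).C_mul _)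
    fin_cases j
    · simpa using hs1
    · simpa using hs2
  have hhom : ∀ jj : Fin 2, (aeval ![σf i₁, σf i₂] (L2 jj)).IsHomogeneous 1 := by
    intro jj
    have h2 := (hL2h jj).aeval _ hwh
    simpa only [one_mul] using h2
  rcases hQirr.isUnit_or_isUnit hQfact with hu | hu
  · exact aux_not_unit (hhom 0) hu
  · exact aux_not_unit (hhom 1) hu


lemma aux_key {d : ℕ} (hd : 1 ≤ d) {Q : MvPolynomial (Fin 3) ℂ}
    (hQh : Q.IsHomogeneous 2) (hQirr : Irreducible Q)
    (p : Fin 3 → ℂ) (hp : eval p Q = 0)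
    (k i₁ i₂ : Fin 3) (hpk : p k ≠ 0)
    (hcov : ∀ i, i = i₁ ∨ i = i₂ ∨ i = k) (h1k : i₁ ≠ k) (h2k : i₂ ≠ k) (h12 : i₁ ≠ i₂)
    {P : MvPolynomial (Fin 3) ℂ} (hP : P.IsHomogeneous d) (hPnd : ¬ Q ∣ P) :
    ∃ L : Fin d → MvPolynomial (Fin 3) ℂ,
      (∀ i, (L i).IsHomogeneous 1) ∧ Q ∣ P - ∏ i, L i := by
  classical
  have hnd : ∃ v, polC Q p v ≠ 0 := by
    by_contra hall
    push_neg at hall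
    exact aux_nondeg hQh hQirr p hp k i₁ i₂ hpk hcov h1k h2k h12 hall
  set e1 : Fin 3 → ℂ := Pi.single i₁ 1 with he1
  set e2 : Fin 3 → ℂ := Pi.single i₂ 1 with he2
  set wp : Fin 3 → MvPolynomial (Fin 2) ℂ :=
    fun i => C (e1 i) * X 0 + C (e2 i) * X 1 with hwp
  set Qw := aeval wp Q with hQwdef
  set Bw : MvPolynomial (Fin 2) ℂ :=
    C (polC Q p e1) * X 0 + C (polC Q p e2) * X 1 with hBwdef
  set ψ : Fin 3 → MvPolynomial (Fin 2) ℂ :=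
    fun i => Qw * C (p i) - Bw * wp i with hψ
  have hwph : ∀ i, (wp i).IsHomogeneous 1 := by
    intro i
    simp only [hwp]
    exact ((isHomogeneous_X ℂ (0 : Fin 2)).C_mul _).add
      ((isHomogeneous_X ℂ (1 : Fin 2)).C_mul _)
  have hQwh : Qw.IsHomogeneous 2 := by
    have h2 := hQh.aeval wp hwph
    rw [hQwdef]
    simpa only [one_mul] using h2
  have hBwh : Bw.IsHomogeneous 1 := by
    simp only [hBwdef]
    exact ((isHomogeneous_X ℂ (0 : Fin 2)).C_mul _).add
      ((isHomogeneous_X ℂ (1 : Fin 2)).C_mul _)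
  have hψh : ∀ i, (ψ i).IsHomogeneous 2 := by
    intro i
    simp only [hψ]
    have ha : (Qw * C (p i)).IsHomogeneous 2 := by
      simpa using hQwh.mul (isHomogeneous_C _ (p i))
    have hb : (Bw * wp i).IsHomogeneous 2 := by
      have := hBwh.mul (hwph i)
      norm_num at this
      exact this
    exact ha.sub hb
  have hwv : ∀ x : Fin 2 → ℂ, (fun i => eval x (wp i)) = x 0 • e1 + x 1 • e2 := by
    intro x
    funext i
    simp only [hwp]
    simp
    ring
  have hQwev : ∀ x : Fin 2 → ℂ, eval x Qw = eval (x 0 • e1 + x 1 • e2) Q := by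
    intro x
    rw [hQwdef, aux_eval_aeval, hwv x]
  have hBwev : ∀ x : Fin 2 → ℂ, eval x Bw = polC Q p (x 0 • e1 + x 1 • e2) := by
    intro x
    rw [polC_add hQh, polC_smul hQh, polC_smul hQh]
    simp only [hBwdef]
    simp
    ring
  have hψev : ∀ (x : Fin 2 → ℂ) (i : Fin 3), eval x (ψ i)
      = eval x Qw * p i - eval x Bw * (x 0 • e1 + x 1 • e2) i := by
    intro x i
    simp only [hψ]
    rw [map_sub, map_mul, map_mul, eval_C]
    have := congrFun (hwv x) i
    rw [this]
  -- the kernel property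
  have hker : ∀ f : MvPolynomial (Fin 3) ℂ, aeval ψ f = 0 → Q ∣ f := by
    intro f hf
    set Lp : MvPolynomial (Fin 3) ℂ :=
      aeval (fun i => C (p i) + X i) Q - C (eval p Q) - Q with hLpdef
    have hLpev : ∀ v, eval v Lp = polC Q p v := by
      intro v
      simp only [hLpdef]
      rw [map_sub, map_sub, eval_C, aux_eval_aeval]
      have e : (fun i => eval v (C (p i) + X i)) = p + v := by
        funext i
        simp
      rw [e, polC]
    have hvan : f * Lp ∈ MvPolynomial.vanishingIdeal ℂ
        (MvPolynomial.zeroLocus ℂ (Ideal.span {Q})) := by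
      rw [MvPolynomial.mem_vanishingIdeal_iff]
      intro v hv
      have hvQ : eval v Q = 0 := by
        rw [MvPolynomial.mem_zeroLocus_iff] at hv
        rw [← aux_aeval_eq_eval]
        exact hv Q (Ideal.subset_span rfl)
      rw [aux_aeval_eq_eval, eval_mul, hLpev]
      by_cases hB : polC Q p v = 0
      · rw [hB, mul_zero]
      · suffices hf0 : eval v f = 0 by rw [hf0, zero_mul]
        obtain ⟨lam, hlam⟩ : ∃ lam : ℂ, lam ^ 2 = -(polC Q p v)⁻¹ := by
          obtain ⟨z, hz⟩ := IsAlgClosed.exists_root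
            (Polynomial.X ^ 2 - Polynomial.C (-(polC Q p v)⁻¹))
            (by
              rw [Polynomial.degree_X_pow_sub_C (by norm_num)]
              norm_num)
          have hz' : z ^ 2 - -(polC Q p v)⁻¹ = 0 := by
            simpa [Polynomial.IsRoot] using hz
          exact ⟨z, by linear_combination hz'⟩
        have hmb : -(lam ^ 2) * polC Q p v = 1 := by
          rw [hlam]
          field_simp
        set g0 : ℂ := v k * (p k)⁻¹ with hg0
        set u : Fin 3 → ℂ := v - g0 • p with hu
        have huk : u k = 0 := by
          simp only [hu, hg0]
          simp
          field_simp
          ring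
        have h21 : i₂ ≠ i₁ := fun hh => h12 hh.symm
        have hk1 : k ≠ i₁ := fun hh => h1k hh.symm
        have hk2 : k ≠ i₂ := fun hh => h2k hh.symm
        have hudecomp : u = u i₁ • e1 + u i₂ • e2 := by
          funext i
          rcases hcov i with h | h | h
          · subst h
            simp [he1, he2, Pi.single_apply, h12, h21]
          · subst h
            simp [he1, he2, Pi.single_apply, h12, h21]
          · subst h
            simp [he1, he2, Pi.single_apply, h1k, h2k, hk1, hk2, huk]
        set x : Fin 2 → ℂ := ![lam * u i₁, lam * u i₂] with hx
        have hwvx : x 0 • e1 + x 1 • e2 = lam • u := by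
          conv_rhs => rw [hudecomp]
          rw [smul_add, smul_smul, smul_smul]
          simp [hx]
        have hlu : lam • u = lam • v + (-(lam * g0)) • p := by
          rw [hu]
          module
        have hqwv : eval (lam • u) Q = -(lam ^ 2) * g0 * polC Q p v := by
          rw [hlu, aux_master hQh v p lam (-(lam * g0)), hvQ, hp, polC_symm]
          ring
        have hbwv : polC Q p (lam • u) = lam * polC Q p v := by
          rw [polC_smul hQh]
          have e : u = v + (-g0) • p := by rw [hu]; module
          rw [e, polC_add hQh, polC_smul hQh, polC_self hQh, hp]
          ring
        have hψx : (fun i => eval x (ψ i)) = v := by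
          funext i
          rw [hψev x i, hQwev, hBwev, hwvx, hqwv, hbwv]
          have huv : u i = v i - g0 * p i := by rw [hu]; simp
          rw [Pi.smul_apply, smul_eq_mul, huv]
          linear_combination (v i) * hmb
        have h0 := congrArg (eval x) hf
        rw [aux_eval_aeval, hψx, map_zero] at h0
        exact h0
    have hQprime : Prime Q := (UniqueFactorizationMonoid.irreducible_iff_prime).mp hQirr
    have hprime : (Ideal.span {Q}).IsPrime :=
      (Ideal.span_singleton_prime hQirr.ne_zero).mpr hQprime
    rw [MvPolynomial.vanishingIdeal_zeroLocus_eq_radical, hprime.radical] at hvan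
    have hdvd : Q ∣ f * Lp := (Ideal.mem_span_singleton).mp hvan
    rcases hQprime.2.2 f Lp hdvd with h | h
    · exact h
    · exfalso
      obtain ⟨v0, hv0⟩ := hnd
      have hLp0 : Lp ≠ 0 := by
        intro h0
        apply hv0
        rw [← hLpev v0, h0, map_zero]
      refine aux_ndvd hQh hLp0 ?_ h
      intro t v
      rw [hLpev, hLpev, polC_smul hQh]
  -- main construction
  have hF0 : aeval ψ P ≠ 0 := fun h0 => hPnd (hker P h0)
  have hFh : (aeval ψ P).IsHomogeneous (2 * d) := hP.aeval ψ hψh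
  obtain ⟨l, hlh, hle⟩ := aux_split (by omega) hFh hF0
  set E : Fin 2 × Fin d ≃ Fin (2 * d) := finProdFinEquiv with hE
  set qj : Fin d → MvPolynomial (Fin 2) ℂ :=
    fun j => l (E (0, j)) * l (E (1, j)) with hqj
  have hqjh : ∀ j, (qj j).IsHomogeneous 2 := by
    intro j
    simp only [hqj]
    have := (hlh (E (0, j))).mul (hlh (E (1, j)))
    norm_num at this
    exact this
  have hqprod : (∏ j, qj j) = ∏ i, l i := by
    have h1 : ∏ pr : Fin 2 × Fin d, l (E pr) = ∏ i, l i := Equiv.prod_comp E l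
    rw [← h1, Fintype.prod_prod_type, Fin.prod_univ_two, ← Finset.prod_mul_distrib]
  -- linear independence of ψ
  have hli : LinearIndependent ℂ ψ := by
    rw [Fintype.linearIndependent_iff]
    intro c hc
    set Lc : MvPolynomial (Fin 3) ℂ := ∑ i, C (c i) * X i with hLcdef
    have h0 : aeval ψ Lc = 0 := by
      rw [hLcdef, map_sum]
      calc (∑ i, aeval ψ (C (c i) * X i)) = ∑ i, c i • ψ i := by
            refine Finset.sum_congr rfl fun i _ => ?_
            rw [map_mul, aeval_X, aeval_C]
            simp [smul_eq_C_mul]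
        _ = 0 := hc
    have hQL := hker Lc h0
    have hLc0 : Lc = 0 := by
      by_contra hne
      refine aux_ndvd hQh hne ?_ hQL
      intro t v
      simp only [hLcdef, map_sum, eval_mul, eval_C, eval_X, Pi.smul_apply, smul_eq_mul]
      rw [Finset.mul_sum]
      exact Finset.sum_congr rfl fun i _ => by ring
    intro j
    have hj := congrArg (eval (Pi.single j 1)) hLc0
    simp only [hLcdef, map_sum, eval_mul, eval_C, eval_X, map_zero] at hj
    rw [Finset.sum_eq_single j (fun i _ hne => by
        rw [Pi.single_eq_of_ne hne, mul_zero])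
      (fun h => absurd (Finset.mem_univ j) h)] at hj
    simpa using hj
  -- dimension argument
  set Sset : Set (MvPolynomial (Fin 2) ℂ) := {aux_m1, aux_m2, aux_m3} with hSset
  set S := Submodule.span ℂ Sset with hS
  have hψS : Submodule.span ℂ (Set.range ψ) ≤ S := by
    rw [Submodule.span_le]
    rintro _ ⟨i, rfl⟩
    exact aux_span2 (hψh i)
  haveI : FiniteDimensional ℂ S := by
    apply FiniteDimensional.span_of_finite
    exact (Set.finite_singleton aux_m3).insert aux_m2 |>.insert aux_m1
  have hfinA : Module.finrank ℂ (Submodule.span ℂ (Set.range ψ)) = 3 := by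
    rw [finrank_span_eq_card hli]
    simp
  have hfinS : Module.finrank ℂ S ≤ 3 := by
    have hcoe : ((({aux_m1, aux_m2, aux_m3} : Finset (MvPolynomial (Fin 2) ℂ)) : Set _)) = Sset := by
      simp [hSset]
    have h1 := finrank_span_finset_le_card (R := ℂ)
      ({aux_m1, aux_m2, aux_m3} : Finset (MvPolynomial (Fin 2) ℂ))
    rw [Set.finrank, hcoe, ← hS] at h1
    refine h1.trans ?_
    have h2 := Finset.card_insert_le aux_m1 ({aux_m2, aux_m3} : Finset (MvPolynomial (Fin 2) ℂ))
    have h3 := Finset.card_insert_le aux_m2 ({aux_m3} : Finset (MvPolynomial (Fin 2) ℂ))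
    simp only [Finset.card_singleton] at h3
    omega
  have hSA : Submodule.span ℂ (Set.range ψ) = S := by
    apply Submodule.eq_of_le_of_finrank_le hψS
    rw [hfinA]
    exact hfinS
  have hchoice : ∀ j : Fin d, ∃ c : Fin 3 → ℂ, (∑ i, c i • ψ i) = qj j := by
    intro j
    have hmem : qj j ∈ Submodule.span ℂ (Set.range ψ) := by
      rw [hSA]
      exact aux_span2 (hqjh j)
    exact (Submodule.mem_span_range_iff_exists_fun ℂ).mp hmem
  choose cs hcs using hchoice
  refine ⟨fun j => ∑ i, C (cs j i) * X i, ?_, ?_⟩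
  · intro j
    apply MvPolynomial.IsHomogeneous.sum
    intro i _
    exact (isHomogeneous_X ℂ i).C_mul _
  · apply hker
    rw [map_sub, map_prod]
    have haj : ∀ j : Fin d, aeval ψ (∑ i, C (cs j i) * X i) = qj j := by
      intro j
      rw [map_sum, ← hcs j]
      refine Finset.sum_congr rfl fun i _ => ?_
      rw [map_mul, aeval_X, aeval_C]
      simp [smul_eq_C_mul]
    rw [Finset.prod_congr rfl fun j _ => haj j, hqprod, ← hle, sub_self]

end ConicAux

open MvPolynomial

/-- Every nonzero homogeneous polynomial function of degree `d ≥ 1` on the conic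
`{Q = 0}` (i.e. every homogeneous `P` of degree `d` not divisible by the irreducible
quadratic form `Q`) is represented, modulo `Q`, by a product of `d` linear forms. -/
theorem factorable_representative_on_conic (d : ℕ) (hd : 1 ≤ d)
    (Q : MvPolynomial (Fin 3) ℂ) (hQh : Q.IsHomogeneous 2) (hQirr : Irreducible Q)
    (P : MvPolynomial (Fin 3) ℂ) (hP : P.IsHomogeneous d) (hPnd : ¬ Q ∣ P) :
    ∃ L : Fin d → MvPolynomial (Fin 3) ℂ,
      (∀ i, (L i).IsHomogeneous 1) ∧ Q ∣ P - ∏ i, L i := by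
  classical
  set g3 : Fin 3 → MvPolynomial (Fin 2) ℂ := ![X 0, X 1, 0] with hg3
  set G0 := aeval g3 Q with hG0
  have hG0h : G0.IsHomogeneous 2 := by
    have h2 := hQh.aeval g3 (fun i => by
      simp only [hg3]
      fin_cases i
      · simpa using isHomogeneous_X ℂ (0 : Fin 2)
      · simpa using isHomogeneous_X ℂ (1 : Fin 2)
      · simpa using isHomogeneous_zero (Fin 2) ℂ 1)
    rw [hG0]
    simpa only [one_mul] using h2
  obtain ⟨α, β, γ, hev⟩ := aux_decomp2 hG0h
  have hevQ : ∀ x y : ℂ, eval ![x, y, 0] Q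
      = α * x ^ 2 + β * (x * y) + γ * y ^ 2 := by
    intro x y
    have h1 := hev ![x, y]
    rw [hG0, aux_eval_aeval] at h1
    have e : (fun i => eval ![x, y] (g3 i)) = ![x, y, 0] := by
      funext i
      simp only [hg3]
      fin_cases i <;> simp
    rw [e] at h1
    simpa using h1
  obtain ⟨pt, hpt0, hptk⟩ : ∃ pt : Fin 3 → ℂ, eval pt Q = 0 ∧ (pt 0 ≠ 0 ∨ pt 1 ≠ 0) := by
    by_cases hα : α = 0
    · refine ⟨![1, 0, 0], ?_, Or.inl (by norm_num)⟩
      rw [show (![1, 0, 0] : Fin 3 → ℂ) = ![(1 : ℂ), 0, 0] from rfl, hevQ]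
      simp [hα]
    · obtain ⟨r, hr⟩ := IsAlgClosed.exists_root
        (Polynomial.C α * Polynomial.X ^ 2 + Polynomial.C β * Polynomial.X
          + Polynomial.C γ)
        (by rw [Polynomial.degree_quadratic hα]; norm_num)
      refine ⟨![r, 1, 0], ?_, Or.inr (by norm_num)⟩
      rw [hevQ]
      have hroot : α * r ^ 2 + β * r + γ = 0 := by
        simpa [Polynomial.IsRoot] using hr
      linear_combination hroot
  rcases hptk with hk | hk
  · exact aux_key hd hQh hQirr pt hpt0 0 1 2 hk (by decide) (by decide) (by decide)
      (by decide) hP hPnd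
  · exact aux_key hd hQh hQirr pt hpt0 1 0 2 hk (by decide) (by decide) (by decide)
      (by decide) hP hPnd
end

section
/- Let Q be an irreducible homogeneous form of degree l > 2 in ℂ[x,y,z], and let ω = (d₁,...,d_s) be a partition of d with s ≥ 2 parts, each d_i ≥ l. Then the dimension of V(d)/Q·V(d−l) minus the sum over i of the dimensions of V(d_i)/Q·V(d_i−l), plus (s−1), equals ((s−1)/2)(l² − 3l + 2), which is strictly positive; hence the product map from tuples of residues to V(d)/Q·V(d−l) cannot be dominant. -/
/-- Dimension count for degree-`l > 2` forms `Q`: for a partition `d = Σ dᵢ` with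
`s ≥ 2` parts, each `dᵢ ≥ l`, the codimension
`dim(V(d)/Q·V(d−l)) − Σᵢ dim(V(dᵢ)/Q·V(dᵢ−l)) + (s−1)` equals
`((s−1)/2)(l² − 3l + 2)`, which is strictly positive; hence the multipole space has
dimension strictly smaller than the target and the product map cannot be dominant. -/
theorem multipole_dimension_deficit (l s : ℕ) (hl : 2 < l) (hs : 2 ≤ s)
    (dd : Fin s → ℕ) (hdi : ∀ i, l ≤ dd i) (d : ℕ) (hd : d = ∑ i, dd i) :
    ((l : ℚ) / 2) * (2 * d - l + 3)
        - (∑ i, ((l : ℚ) / 2) * (2 * (dd i : ℚ) - l + 3)) + ((s : ℚ) - 1)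
      = (((s : ℚ) - 1) / 2) * ((l : ℚ) ^ 2 - 3 * l + 2) ∧
    0 < (((s : ℚ) - 1) / 2) * ((l : ℚ) ^ 2 - 3 * l + 2) ∧
    (∑ i, ((l : ℚ) / 2) * (2 * (dd i : ℚ) - l + 3)) - ((s : ℚ) - 1)
      < ((l : ℚ) / 2) * (2 * d - l + 3) := by
  have hdq : (d : ℚ) = ∑ i, (dd i : ℚ) := by rw [hd]; push_cast; rfl
  have hsum : (∑ i, ((l : ℚ) / 2) * (2 * (dd i : ℚ) - l + 3))
      = (l : ℚ) * d + (s : ℚ) * (((l : ℚ) / 2) * (3 - l)) := by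
    have h1 : ∀ i ∈ Finset.univ, ((l : ℚ) / 2) * (2 * (dd i : ℚ) - l + 3)
        = (l : ℚ) * (dd i : ℚ) + ((l : ℚ) / 2) * (3 - l) := by intro i _; ring
    rw [Finset.sum_congr rfl h1, Finset.sum_add_distrib, ← Finset.mul_sum, ← hdq,
      Finset.sum_const, Finset.card_univ, Fintype.card_fin, nsmul_eq_mul]
  have hlq : (3 : ℚ) ≤ (l : ℚ) := by exact_mod_cast hl
  have hsq : (2 : ℚ) ≤ (s : ℚ) := by exact_mod_cast hs
  have heq : ((l : ℚ) / 2) * (2 * d - l + 3)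
        - (∑ i, ((l : ℚ) / 2) * (2 * (dd i : ℚ) - l + 3)) + ((s : ℚ) - 1)
      = (((s : ℚ) - 1) / 2) * ((l : ℚ) ^ 2 - 3 * l + 2) := by rw [hsum]; ring
  have hpos : 0 < (((s : ℚ) - 1) / 2) * ((l : ℚ) ^ 2 - 3 * l + 2) := by
    nlinarith [sq_nonneg ((l : ℚ) - 3)]
  exact ⟨heq, hpos, by linarith⟩
end
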